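/- (Theorem 1, loss partition.) Let X be a real n×p matrix (n ≥ 1, p > 0) whose columns each sum to zero (1ᵀX = 0), let K̂ = (1/p) X Xᵀ, and for τ² > 0 and 0 ≤ η < 1 let Σ = τ²(η K̂ + (1 − η) I). For y ∈ ℝⁿ with mean ȳ and ẏ = y − ȳ 1, define the PLMM loss L(β₀, β) = (y − 1 β₀ − X β)ᵀ Σ⁻¹ (y − 1 β₀ − X β) for β₀ ∈ ℝ and β ∈ ℝᵖ. Then for all β₀ and β, L(β₀, β) = n (ȳ − β₀)² / (τ²(1 − η)) + (ẏ − X β)ᵀ Σ⁻¹ (ẏ − X β); that is, the loss separates into a term involving only β₀ and a term involving only β. -/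

import Mathlib

open Matrix

lemma posSemidef_smul_real {n : ℕ} {A : Matrix (Fin n) (Fin n) ℝ} (hA : A.PosSemidef)
    {c : ℝ} (hc : 0 ≤ c) : (c • A).PosSemidef := by
  refine ⟨?_, fun x => ?_⟩
  · unfold Matrix.IsHermitian
    rw [conjTranspose_smul, hA.1.eq]
    simp
  · exact (hA.smul hc).2 x

lemma posDef_smul_real {n : ℕ} {A : Matrix (Fin n) (Fin n) ℝ} (hA : A.PosDef)
    {c : ℝ} (hc : 0 < c) : (c • A).PosDef := by
  refine ⟨?_, fun x hx => ?_⟩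
  · unfold Matrix.IsHermitian
    rw [conjTranspose_smul, hA.1.eq]
    simp
  · exact (hA.smul hc).2 hx

/-- Theorem 1 (loss partition): for column-centered `X`, `K̂ = (1/p) X Xᵀ`,
`Σ = τ²(η K̂ + (1 − η) I)` with `τ² > 0`, `0 ≤ η < 1`, `y ∈ ℝⁿ` with mean `ȳ`
and `ẏ = y − ȳ 1`, the PLMM loss
`L(β₀, β) = (y − 1 β₀ − X β)ᵀ Σ⁻¹ (y − 1 β₀ − X β)` separates as
`L(β₀, β) = n (ȳ − β₀)² / (τ²(1 − η)) + (ẏ − X β)ᵀ Σ⁻¹ (ẏ − X β)`. -/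
theorem plmm_loss_partition {n p : ℕ} (hn : 1 ≤ n) (hp : 0 < p)
    (X : Matrix (Fin n) (Fin p) ℝ)
    (hX : Matrix.vecMul (fun _ => (1 : ℝ)) X = 0)
    (K : Matrix (Fin n) (Fin n) ℝ)
    (hK : K = ((p : ℝ)⁻¹) • (X * Xᵀ))
    (τ2 η : ℝ) (hτ : 0 < τ2) (hη0 : 0 ≤ η) (hη1 : η < 1)
    (Sig : Matrix (Fin n) (Fin n) ℝ)
    (hSig : Sig = τ2 • (η • K + (1 - η) • (1 : Matrix (Fin n) (Fin n) ℝ)))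
    (y : Fin n → ℝ) (ybar : ℝ) (hybar : ybar = (∑ i, y i) / n)
    (ydot : Fin n → ℝ) (hydot : ydot = y - ybar • (fun _ => (1 : ℝ)))
    (L : ℝ → (Fin p → ℝ) → ℝ)
    (hL : ∀ (β₀ : ℝ) (β : Fin p → ℝ),
      L β₀ β = dotProduct
        (y - β₀ • (fun _ => (1 : ℝ)) - Matrix.mulVec X β)
        (Matrix.mulVec Sig⁻¹ (y - β₀ • (fun _ => (1 : ℝ)) - Matrix.mulVec X β))) :
    ∀ (β₀ : ℝ) (β : Fin p → ℝ),
      L β₀ β = (n : ℝ) * (ybar - β₀) ^ 2 / (τ2 * (1 - η)) +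
        dotProduct (ydot - Matrix.mulVec X β)
          (Matrix.mulVec Sig⁻¹ (ydot - Matrix.mulVec X β)) := by
  intro β₀ β
  set one : Fin n → ℝ := fun _ => (1 : ℝ) with hone
  have hn0 : (n : ℝ) ≠ 0 := by positivity
  have h1η : (0 : ℝ) < 1 - η := by linarith
  -- Xᵀ kills the ones vector
  have hXone : Matrix.mulVec Xᵀ one = 0 := by
    rw [Matrix.mulVec_transpose, hX]
  -- Sig applied to the ones vector
  have hKone : Matrix.mulVec K one = 0 := by
    rw [hK, smul_mulVec, ← Matrix.mulVec_mulVec, hXone, Matrix.mulVec_zero, smul_zero]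
  have hSigone : Matrix.mulVec Sig one = (τ2 * (1 - η)) • one := by
    rw [hSig, smul_mulVec, add_mulVec, smul_mulVec, hKone,
      smul_mulVec, Matrix.one_mulVec, smul_zero, zero_add, smul_smul]
  -- Sig is positive definite
  have hPSD : Matrix.PosSemidef (η • K) := by
    apply posSemidef_smul_real _ hη0
    rw [hK]
    exact posSemidef_smul_real (Matrix.posSemidef_self_mul_conjTranspose X)
      (by positivity)
  have hPD : Matrix.PosDef Sig := by
    rw [hSig]
    exact posDef_smul_real
      (Matrix.PosDef.posSemidef_add hPSD (posDef_smul_real Matrix.PosDef.one h1η)) hτ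
  have hUnit : IsUnit Sig := hPD.isUnit
  have hInvH : Sig⁻¹.IsHermitian := hPD.isHermitian.inv
  have hcne : τ2 * (1 - η) ≠ 0 := by positivity
  -- Sig⁻¹ applied to the ones vector
  have hSigInvOne : Matrix.mulVec Sig⁻¹ one = (τ2 * (1 - η))⁻¹ • one := by
    have h := congrArg (Matrix.mulVec Sig⁻¹) hSigone
    rw [Matrix.mulVec_mulVec, Matrix.nonsing_inv_mul _ (Matrix.isUnit_iff_isUnit_det _ |>.mp hUnit),
      Matrix.one_mulVec, Matrix.mulVec_smul] at h
    calc Matrix.mulVec Sig⁻¹ one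
        = (τ2 * (1 - η))⁻¹ • ((τ2 * (1 - η)) • Matrix.mulVec Sig⁻¹ one) := by
          rw [smul_smul, inv_mul_cancel₀ hcne, one_smul]
      _ = (τ2 * (1 - η))⁻¹ • one := by rw [← h]
  -- centered residual is orthogonal to ones
  have hsum : dotProduct ydot one = 0 := by
    simp only [hydot, dotProduct, Pi.sub_apply, Pi.smul_apply, hone, smul_eq_mul,
      mul_one, Finset.sum_sub_distrib, Finset.sum_const, Finset.card_univ, Fintype.card_fin,
      nsmul_eq_mul]
    rw [hybar]
    field_simp
    ring
  have hXβone : dotProduct (Matrix.mulVec X β) one = 0 := by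
    rw [dotProduct_comm, Matrix.dotProduct_mulVec, hX, zero_dotProduct]
  set w : Fin n → ℝ := ydot - Matrix.mulVec X β with hw
  have hwone : dotProduct w one = 0 := by
    rw [hw, sub_dotProduct, hsum, hXβone, sub_zero]
  have honew : dotProduct one w = 0 := by
    rw [dotProduct_comm]; exact hwone
  -- decompose the residual
  have hres : y - β₀ • one - Matrix.mulVec X β = w + (ybar - β₀) • one := by
    rw [hw, hydot]
    funext i
    simp [hone, sub_mul, mul_comm]
    ring
  have honeone : dotProduct one one = (n : ℝ) := by
    simp [dotProduct, hone]
  -- cross terms vanish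
  have hwSone : dotProduct w (Matrix.mulVec Sig⁻¹ one) = 0 := by
    rw [hSigInvOne, dotProduct_smul, hwone, smul_zero]
  have honeSw : dotProduct one (Matrix.mulVec Sig⁻¹ w) = 0 := by
    rw [Matrix.dotProduct_mulVec, ← Matrix.mulVec_transpose]
    have : Sig⁻¹ᵀ = Sig⁻¹ := by
      have := hInvH
      unfold Matrix.IsHermitian at this
      simpa using this
    rw [this, hSigInvOne]
    rw [smul_dotProduct, honew, smul_zero]
  have honeSone : dotProduct one (Matrix.mulVec Sig⁻¹ one) = (n : ℝ) / (τ2 * (1 - η)) := by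
    rw [hSigInvOne, dotProduct_smul, honeone, smul_eq_mul]
    field_simp
  rw [hL, hres]
  rw [add_dotProduct, Matrix.mulVec_add, dotProduct_add, dotProduct_add,
    Matrix.mulVec_smul, dotProduct_smul, hwSone, smul_dotProduct,
    smul_dotProduct, honeSw, dotProduct_smul, honeSone]
  simp only [smul_eq_mul, mul_zero]
  ring
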